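/- arXiv:1703.05976 — 4 statements merged into one kernel-verified Lean document; each statement's English description precedes it below -/
import Mathlib

section
/- For every α > -1, there exist z, ξ in the open unit disk such that (2+α)·(1 + (2+α)z̄ξ)/(1-z̄ξ)^{4+α} = 0. Equivalently, the point ζ = -1/(2+α) lies in the open unit disk and is a zero of ζ ↦ (1+(2+α)ζ)(1-ζ)^{-(4+α)}. -/
open Metric Complex

/-- For every `α > -1` there exist `z, ξ` in the unit disk with
`(2+α)(1+(2+α)z̄ξ)/(1-z̄ξ)^{4+α} = 0`; equivalently `ζ = -1/(2+α)` lies in the unit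
disk and is a zero of `ζ ↦ (1+(2+α)ζ)(1-ζ)^{-(4+α)}`. -/
theorem stmt5 (α : ℝ) (hα : -1 < α) :
    (∃ z ξ : ℂ, ‖z‖ < 1 ∧ ‖ξ‖ < 1 ∧
      (2 + (α:ℂ)) * (1 + (2 + (α:ℂ)) * ((starRingEnd ℂ) z * ξ)) /
        (1 - (starRingEnd ℂ) z * ξ) ^ (4 + (α:ℂ)) = 0) ∧
    ‖(-1 / (2 + (α:ℂ)))‖ < 1 ∧
    (1 + (2 + (α:ℂ)) * (-1 / (2 + (α:ℂ)))) *
      (1 - (-1 / (2 + (α:ℂ)))) ^ (-(4 + (α:ℂ))) = 0 := by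
  have h1 : (1:ℝ) < 2 + α := by linarith
  have h0R : (2 + α : ℝ) ≠ 0 := by linarith
  have h0 : (2 + (α:ℂ)) ≠ 0 := by
    exact_mod_cast (show ((2 + α : ℝ) : ℂ) ≠ 0 by exact_mod_cast h0R)
  have hzero : 1 + (2 + (α:ℂ)) * (-1 / (2 + (α:ℂ))) = 0 := by
    field_simp
    ring
  refine ⟨?_, ?_, ?_⟩
  · set s : ℝ := Real.sqrt (1 / (2 + α)) with hs
    have hs2 : s ^ 2 = 1 / (2 + α) := by
      rw [hs, Real.sq_sqrt]
      positivity
    have hslt : s < 1 := by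
      rw [hs]
      have : (1 / (2 + α)) < 1 := by
        rw [div_lt_one (by linarith)]; linarith
      calc Real.sqrt (1 / (2 + α)) < Real.sqrt 1 :=
            Real.sqrt_lt_sqrt (by positivity) this
        _ = 1 := Real.sqrt_one
    refine ⟨-(s:ℂ), (s:ℂ), ?_, ?_, ?_⟩
    · simpa using abs_lt.mpr ⟨by nlinarith [Real.sqrt_nonneg (1 / (2 + α))], hslt⟩
    · simpa using abs_lt.mpr ⟨by nlinarith [Real.sqrt_nonneg (1 / (2 + α))], hslt⟩
    · have hc : (starRingEnd ℂ) (-(s:ℂ)) * (s:ℂ) = -1 / (2 + (α:ℂ)) := by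
        have : ((s:ℂ)) ^ 2 = 1 / (2 + (α:ℂ)) := by
          rw [show ((s:ℂ)) ^ 2 = ((s ^ 2 : ℝ) : ℂ) by push_cast; ring, hs2]
          push_cast; ring
        rw [map_neg, Complex.conj_ofReal]
        rw [neg_mul, ← sq, this]
        ring
      rw [hc, hzero]
      simp
  · have : (-1 / (2 + (α:ℂ))) = ((-1 / (2 + α) : ℝ) : ℂ) := by push_cast; ring
    rw [this, Complex.norm_real, Real.norm_eq_abs]
    rw [abs_div]
    rw [abs_of_pos (show (0:ℝ) < 2 + α by linarith)]
    rw [div_lt_one (by linarith)]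
    simp only [abs_neg, abs_one]
    linarith
  · rw [hzero, zero_mul]
end

section
/- Define polynomials p_{α,n} recursively by p_{α,1}(ζ) = 4(2+α) + 4(2+α)²ζ and p_{α,m+1}(ζ) = 4p_{α,m}'(ζ)(1-ζ)² + 4(2+α+2m)p_{α,m}(ζ)(1-ζ) + 4ζ p_{α,m}''(ζ)(1-ζ)² + 8(2+α+2m)ζ p_{α,m}'(ζ)(1-ζ) + 4(2+α+2m)(3+α+2m)ζ p_{α,m}(ζ). Then for each n ≥ 1, p_{α,n} is a polynomial of degree exactly n (for α > -1). -/
open Polynomial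

/-- The recursion defining the numerator polynomials `p_{α,n}` of the iterated
associated-weight Bergman kernels. -/
def IsKernelNumeratorSeq (α : ℝ) (p : ℕ → Polynomial ℂ) : Prop :=
  p 1 = C (4 * (2 + (α:ℂ))) + C (4 * (2 + (α:ℂ)) ^ 2) * X ∧
  ∀ m : ℕ, 1 ≤ m → p (m + 1) =
    4 * derivative (p m) * (1 - X) ^ 2
    + C (4 * (2 + (α:ℂ) + 2 * (m:ℂ))) * p m * (1 - X)
    + 4 * X * derivative (derivative (p m)) * (1 - X) ^ 2
    + C (8 * (2 + (α:ℂ) + 2 * (m:ℂ))) * X * derivative (p m) * (1 - X)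
    + C (4 * (2 + (α:ℂ) + 2 * (m:ℂ)) * (3 + (α:ℂ) + 2 * (m:ℂ))) * X * p m

/-- Decomposition of the recursion's right-hand side into monomial-shifted pieces. -/
private lemma bergman_decomp (β : ℂ) (q : Polynomial ℂ) :
    4 * derivative q * (1 - X) ^ 2 + C (4 * β) * q * (1 - X)
      + 4 * X * derivative (derivative q) * (1 - X) ^ 2
      + C (8 * β) * X * derivative q * (1 - X)
      + C (4 * β * (β + 1)) * X * q
  = C (4*β) * q + C (4*β^2) * (q * X^1) + C 4 * derivative q
      + C (8*β - 8) * (derivative q * X^1) + C (4 - 8*β) * (derivative q * X^2)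
      + C 4 * (derivative (derivative q) * X^1) + C (-8) * (derivative (derivative q) * X^2)
      + C 4 * (derivative (derivative q) * X^3) := by
  simp only [map_mul, map_add, map_sub, map_neg, map_one, map_ofNat, map_pow]
  ring

/-- Top coefficient of the recursion's right-hand side. -/
private lemma bergman_coeff (β : ℂ) (m : ℕ) (hm : 1 ≤ m) (q : Polynomial ℂ)
    (hq : q.natDegree ≤ m) :
    (C (4*β) * q + C (4*β^2) * (q * X^1) + C 4 * derivative q
      + C (8*β - 8) * (derivative q * X^1) + C (4 - 8*β) * (derivative q * X^2)
      + C 4 * (derivative (derivative q) * X^1) + C (-8) * (derivative (derivative q) * X^2)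
      + C 4 * (derivative (derivative q) * X^3)).coeff (m+1)
    = (4*β^2 + (4 - 8*β) * m + 4 * m * (m-1)) * q.coeff m := by
  have hz : ∀ i, m < i → q.coeff i = 0 := fun i hi =>
    coeff_eq_zero_of_natDegree_lt (lt_of_le_of_lt hq hi)
  obtain ⟨k, rfl⟩ : ∃ k, m = k + 1 := ⟨m - 1, by omega⟩
  rcases k with _ | j
  · have z2 : q.coeff 2 = 0 := hz _ (by omega)
    have z3 : q.coeff 3 = 0 := hz _ (by omega)
    simp only [coeff_add, coeff_C_mul, coeff_mul_X_pow', coeff_derivative]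
    norm_num [z2, z3]
    ring
  · have z1 : q.coeff (j+3) = 0 := hz _ (by omega)
    have z2 : q.coeff (j+4) = 0 := hz _ (by omega)
    simp only [coeff_add, coeff_C_mul, coeff_mul_X_pow', coeff_derivative,
      show (1:ℕ) ≤ j+1+1+1 from by omega, show (2:ℕ) ≤ j+1+1+1 from by omega,
      show (3:ℕ) ≤ j+1+1+1 from by omega, if_true,
      show j+1+1+1-1 = j+2 from rfl, show j+1+1+1-2 = j+1 from rfl,
      show j+1+1+1-3 = j from rfl,
      show j+2+1 = j+3 from rfl, show j+1+1 = j+2 from rfl,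
      show j+3+1 = j+4 from rfl, show j+2+1+1 = j+4 from rfl,
      z1, z2]
    push_cast
    ring

/-- Degree bound for the recursion's right-hand side. -/
private lemma bergman_degree_le (β : ℂ) (m : ℕ) (hm : 1 ≤ m) (q : Polynomial ℂ)
    (hq : q.natDegree ≤ m) :
    (C (4*β) * q + C (4*β^2) * (q * X^1) + C 4 * derivative q
      + C (8*β - 8) * (derivative q * X^1) + C (4 - 8*β) * (derivative q * X^2)
      + C 4 * (derivative (derivative q) * X^1) + C (-8) * (derivative (derivative q) * X^2)
      + C 4 * (derivative (derivative q) * X^3)).degree ≤ ((m + 1 : ℕ) : WithBot ℕ) := by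
  rw [← natDegree_le_iff_degree_le]
  have hs : (derivative q).natDegree ≤ m - 1 :=
    (natDegree_derivative_le q).trans (by omega)
  have hmul : ∀ (u : Polynomial ℂ) (i : ℕ), (u * X ^ i).natDegree ≤ u.natDegree + i := by
    intro u i
    exact (natDegree_mul_le).trans (by simp [natDegree_X_pow])
  have ht3 : (derivative (derivative q) * X ^ 3).natDegree ≤ m + 1 := by
    rcases Nat.lt_or_ge m 2 with h | h
    · have hs0 : (derivative q).natDegree = 0 := by omega
      obtain ⟨c, hc⟩ := natDegree_eq_zero.mp hs0
      rw [← hc, derivative_C]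
      simp
    · have ht : (derivative (derivative q)).natDegree ≤ m - 2 :=
        (natDegree_derivative_le _).trans (by omega)
      exact (hmul _ 3).trans (by omega)
  have ht : (derivative (derivative q)).natDegree ≤ m - 1 :=
    (natDegree_derivative_le _).trans (by omega)
  refine natDegree_add_le_iff_left _ _ ((natDegree_C_mul_le _ _).trans ht3) |>.mpr ?_
  refine (natDegree_add_le _ _).trans (max_le ?_ ((natDegree_C_mul_le _ _).trans
    ((hmul _ 2).trans (by omega))))
  refine (natDegree_add_le _ _).trans (max_le ?_ ((natDegree_C_mul_le _ _).trans
    ((hmul _ 1).trans (by omega))))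
  refine (natDegree_add_le _ _).trans (max_le ?_ ((natDegree_C_mul_le _ _).trans
    ((hmul _ 2).trans (by omega))))
  refine (natDegree_add_le _ _).trans (max_le ?_ ((natDegree_C_mul_le _ _).trans
    ((hmul _ 1).trans (by omega))))
  refine (natDegree_add_le _ _).trans (max_le ?_ ((natDegree_C_mul_le _ _).trans (by omega)))
  refine (natDegree_add_le _ _).trans (max_le ?_ ((natDegree_C_mul_le _ _).trans
    ((hmul _ 1).trans (by omega))))
  exact (natDegree_C_mul_le _ _).trans (by omega)

/-- Each `p_{α,n}` is a polynomial of degree exactly `n` (for `α > -1`). -/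
theorem stmt8 (α : ℝ) (hα : -1 < α) (p : ℕ → Polynomial ℂ)
    (hp : IsKernelNumeratorSeq α p) :
    ∀ n : ℕ, 1 ≤ n → (p n).degree = n := by
  obtain ⟨h1, hrec⟩ := hp
  intro n hn
  induction n, hn using Nat.le_induction with
  | base =>
    have hb : (4 * (2 + (α:ℂ)) ^ 2) ≠ 0 := by
      have h2 : ((2 + α : ℝ) : ℂ) ≠ 0 := Complex.ofReal_ne_zero.mpr (by linarith)
      push_cast at h2
      exact mul_ne_zero (by norm_num) (pow_ne_zero _ h2)
    rw [h1, add_comm]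
    exact_mod_cast degree_linear hb
  | succ m hm ih =>
    have hnat : (p m).natDegree = m := natDegree_eq_of_degree_eq_some ih
    have hq : (p m).natDegree ≤ m := le_of_eq hnat
    have hne : p m ≠ 0 := fun h => by simp [h] at ih
    have ha : (p m).coeff m ≠ 0 := by
      have := leadingCoeff_ne_zero.mpr hne
      rwa [Polynomial.leadingCoeff, hnat] at this
    rw [hrec m hm,
      show (3 + (α:ℂ) + 2 * (m:ℂ)) = (2 + (α:ℂ) + 2 * (m:ℂ)) + 1 from by ring,
      bergman_decomp (2 + (α:ℂ) + 2*(m:ℂ)) (p m)]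
    apply le_antisymm (bergman_degree_le _ m hm _ hq)
    apply le_degree_of_ne_zero
    rw [bergman_coeff _ m hm _ hq,
      show (4*(2 + (α:ℂ) + 2*(m:ℂ))^2 + (4 - 8*(2 + (α:ℂ) + 2*(m:ℂ))) * (m:ℂ)
        + 4 * (m:ℂ) * ((m:ℂ)-1)) = 4 * ((m:ℂ) + 2 + α)^2 from by ring]
    refine mul_ne_zero (mul_ne_zero (by norm_num) (pow_ne_zero _ ?_)) ha
    have h2 : (((m:ℝ) + 2 + α : ℝ) : ℂ) ≠ 0 := by
      refine Complex.ofReal_ne_zero.mpr ?_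
      have : (0:ℝ) ≤ (m:ℝ) := Nat.cast_nonneg m
      linarith
    push_cast at h2
    exact h2
end

section
/- For each fixed n ≥ 1, the coefficients of p_{α,n}(ζ) = Σ_{k=0}^{n} c_{α,n,k}ζ^k (defined by the recursion from p_{α,1}(ζ)=4(2+α)+4(2+α)²ζ) satisfy: |c_{α,n,n}| ≍ α^{2n} and |c_{α,n,k}| ≲ α^{2n-1} for k < n, as α → ∞. Consequently, there exists α₀ > -1 such that for all α > α₀, |c_{α,n,n}| > Σ_{k=0}^{n-1} |c_{α,n,k}|. -/
open Polynomial

noncomputable def pA : Polynomial ℂ := Polynomial.X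

noncomputable def pstep (m : ℕ) (q : Polynomial (Polynomial ℂ)) : Polynomial (Polynomial ℂ) :=
  4 * derivative q * (1 - X) ^ 2
  + C (4 * (2 + pA + 2 * (m : Polynomial ℂ))) * q * (1 - X)
  + 4 * X * derivative (derivative q) * (1 - X) ^ 2
  + C (8 * (2 + pA + 2 * (m : Polynomial ℂ))) * X * derivative q * (1 - X)
  + C (4 * (2 + pA + 2 * (m : Polynomial ℂ)) * (3 + pA + 2 * (m : Polynomial ℂ))) * X * q

noncomputable def Pn : ℕ → Polynomial (Polynomial ℂ)
  | 0 => C (4 * (2 + pA)) + C (4 * (2 + pA) ^ 2) * X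
  | (j+1) => pstep (j+1) (Pn j)

lemma pstep_eq (m : ℕ) (q : Polynomial (Polynomial ℂ)) :
    pstep m q =
      C 4 * (derivative q * X ^ 0) - C 8 * (derivative q * X ^ 1) + C 4 * (derivative q * X ^ 2)
      + C (4 * (2 + pA + 2 * m)) * (q * X ^ 0) - C (4 * (2 + pA + 2 * m)) * (q * X ^ 1)
      + C 4 * (derivative (derivative q) * X ^ 1) - C 8 * (derivative (derivative q) * X ^ 2)
      + C 4 * (derivative (derivative q) * X ^ 3)
      + C (8 * (2 + pA + 2 * m)) * (derivative q * X ^ 1)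
      - C (8 * (2 + pA + 2 * m)) * (derivative q * X ^ 2)
      + C (4 * (2 + pA + 2 * m) * (3 + pA + 2 * m)) * (q * X ^ 1) := by
  simp only [pstep, map_ofNat]
  ring

lemma Pn_coeff_zero : ∀ j, ∀ i, j + 1 < i → (Pn j).coeff i = 0 := by
  intro j
  induction j with
  | zero =>
    intro i hi
    obtain ⟨l, rfl⟩ : ∃ l, i = l + 2 := ⟨i - 2, by omega⟩
    simp only [Pn]
    rw [coeff_add, coeff_C_mul, coeff_C, coeff_X]
    simp
  | succ j ih =>
    intro i hi
    obtain ⟨l, rfl⟩ : ∃ l, i = l + 3 := ⟨i - 3, by omega⟩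
    show (pstep (j+1) (Pn j)).coeff (l+3) = 0
    rw [pstep_eq]
    simp only [coeff_add, coeff_sub, coeff_C_mul, coeff_mul_X_pow', coeff_derivative]
    split_ifs <;> try omega
    simp only [Nat.sub_zero, show l+3-1 = l+2 from rfl, show l+3-2 = l+1 from rfl,
      show l+3-3 = l from rfl]
    rw [ih (l+3+1) (by omega), ih (l+1+1) (by omega), ih (l+3) (by omega)]
    ring

noncomputable def topC (n : ℕ) : Polynomial ℂ :=
  4 ^ n * ∏ t ∈ Finset.range n, (pA + 2 + (t : Polynomial ℂ)) ^ 2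

lemma Pn_coeff_top : ∀ j, (Pn j).coeff (j + 1) = topC (j + 1) := by
  intro j
  induction j with
  | zero =>
    simp only [Pn, topC]
    rw [coeff_add, coeff_C_mul, coeff_C, coeff_X]
    simp [Finset.prod_range_one]
    ring
  | succ j ih =>
    show (pstep (j+1) (Pn j)).coeff (j+2) = topC (j+2)
    rw [pstep_eq]
    simp only [coeff_add, coeff_sub, coeff_C_mul, coeff_mul_X_pow', coeff_derivative,
      Nat.sub_zero]
    split_ifs with h0 h1 h2 h3 <;> try omega
    · -- 3 ≤ j + 2, so 1 ≤ j
      have hj : 1 ≤ j := by omega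
      simp only [show j+2-1 = j+1 from rfl, show j+2-2 = j from rfl, show j+2-3 = j-1 from rfl]
      rw [show j-1+1 = j from by omega]
      rw [Pn_coeff_zero j (j+1+1) (by omega), Pn_coeff_zero j (j+2+1) (by omega), ih]
      rw [show topC (j+2) = 4 * (pA + 2 + ((j:Polynomial ℂ)+1)) ^ 2 * topC (j+1) from by
        simp only [topC, Finset.prod_range_succ]; push_cast; ring]
      rw [Nat.cast_sub hj]
      push_cast
      ring
    · -- j + 2 < 3, so j = 0
      have hj : j = 0 := by omega
      subst hj
      have e0 : (Pn 0).coeff 0 = 4*(2+pA) := by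
        simp only [Pn]; rw [coeff_add, coeff_C_mul, coeff_C, coeff_X]; norm_num
      have e1 : (Pn 0).coeff 1 = 4*(2+pA)^2 := by
        simp only [Pn]; rw [coeff_add, coeff_C_mul, coeff_C, coeff_X]; norm_num
      have e2 : (Pn 0).coeff 2 = 0 := Pn_coeff_zero 0 2 (by omega)
      have e3 : (Pn 0).coeff 3 = 0 := Pn_coeff_zero 0 3 (by omega)
      have etop : topC (0+2) = 16 * (pA + 2)^2 * (pA + 3)^2 := by
        simp [topC, Finset.prod_range_succ]; push_cast; ring
      norm_num [e0, e1, e2, e3, etop]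
      ring

lemma ndadd {a b : Polynomial ℂ} {f : ℕ} (ha : a.natDegree ≤ f) (hb : b.natDegree ≤ f) :
    (a + b).natDegree ≤ f := natDegree_add_le_of_degree_le ha hb

lemma ndsub {a b : Polynomial ℂ} {f : ℕ} (ha : a.natDegree ≤ f) (hb : b.natDegree ≤ f) :
    (a - b).natDegree ≤ f := (natDegree_sub_le a b).trans (max_le ha hb)

lemma ndmul {a b : Polynomial ℂ} {d e f : ℕ} (ha : a.natDegree ≤ d) (hb : b.natDegree ≤ e)
    (h : d + e ≤ f) : (a * b).natDegree ≤ f :=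
  le_trans (natDegree_mul_le_of_le ha hb) h

lemma hite {P : Prop} [Decidable P] {x : Polynomial ℂ} {d : ℕ} (h : P → x.natDegree ≤ d) :
    (if P then x else 0).natDegree ≤ d := by
  split_ifs with hP
  · exact h hP
  · simp

lemma hcast (t : ℕ) : (((t : Polynomial ℂ)) + 1).natDegree ≤ 0 := by
  have : ((t : Polynomial ℂ) + 1) = ((t + 1 : ℕ) : Polynomial ℂ) := by push_cast; ring
  rw [this, natDegree_natCast]

lemma Pn_coeff_deg : ∀ j i, ((Pn j).coeff i).natDegree ≤ (j + 1) + i := by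
  intro j
  induction j with
  | zero =>
    intro i
    match i with
    | 0 =>
      simp only [Pn]
      rw [coeff_add, coeff_C_mul, coeff_C, coeff_X]
      norm_num
      simp only [pA]
      compute_degree
    | 1 =>
      simp only [Pn]
      rw [coeff_add, coeff_C_mul, coeff_C, coeff_X]
      norm_num
      simp only [pA]
      compute_degree
    | (l+2) =>
      rw [Pn_coeff_zero 0 (l+2) (by omega)]
      simp
  | succ j ih =>
    intro i
    show ((pstep (j+1) (Pn j)).coeff i).natDegree ≤ (j+2) + i
    have hc0 : ((4 : Polynomial ℂ)).natDegree ≤ 0 := by compute_degree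
    have hc0' : ((8 : Polynomial ℂ)).natDegree ≤ 0 := by compute_degree
    have hc1 : ((4 : Polynomial ℂ) * (2 + pA + 2 * ((j+1 : ℕ) : Polynomial ℂ))).natDegree ≤ 1 := by
      simp only [pA]; compute_degree
    have hc2 : ((8 : Polynomial ℂ) * (2 + pA + 2 * ((j+1 : ℕ) : Polynomial ℂ))).natDegree ≤ 1 := by
      simp only [pA]; compute_degree
    have hc3 : ((4 : Polynomial ℂ) * (2 + pA + 2 * ((j+1 : ℕ) : Polynomial ℂ))
        * (3 + pA + 2 * ((j+1 : ℕ) : Polynomial ℂ))).natDegree ≤ 2 := by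
      simp only [pA]; compute_degree
    rw [pstep_eq]
    simp only [coeff_add, coeff_sub, coeff_C_mul, coeff_mul_X_pow', coeff_derivative]
    repeat first | apply ndadd | apply ndsub
    · exact ndmul hc0 (hite (d := (j+2)+i) fun h => ndmul (ih _) (hcast _) (by omega)) (by omega)
    · rw [natDegree_neg]
      exact ndmul hc0' (hite (d := (j+2)+i) fun h => ndmul (ih _) (hcast _) (by omega)) (by omega)
    · exact ndmul hc0 (hite (d := (j+2)+i) fun h => ndmul (ih _) (hcast _) (by omega)) (by omega)
    · exact ndmul hc1 (hite (d := (j+1)+i) fun h => (ih _).trans (by omega)) (by omega)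
    · rw [natDegree_neg]
      exact ndmul hc1 (hite (d := (j+1)+i) fun h => (ih _).trans (by omega)) (by omega)
    · exact ndmul hc0 (hite (d := (j+2)+i) fun h =>
        ndmul (ndmul (ih _) (hcast _) le_rfl) (hcast _) (by omega)) (by omega)
    · rw [natDegree_neg]
      exact ndmul hc0' (hite (d := (j+2)+i) fun h =>
        ndmul (ndmul (ih _) (hcast _) le_rfl) (hcast _) (by omega)) (by omega)
    · exact ndmul hc0 (hite (d := (j+2)+i) fun h =>
        ndmul (ndmul (ih _) (hcast _) le_rfl) (hcast _) (by omega)) (by omega)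
    · exact ndmul hc2 (hite (d := (j+1)+i) fun h => ndmul (ih _) (hcast _) (by omega)) (by omega)
    · rw [natDegree_neg]
      exact ndmul hc2 (hite (d := (j+1)+i) fun h => ndmul (ih _) (hcast _) (by omega)) (by omega)
    · exact ndmul hc3 (hite (d := j+i) fun h => (ih _).trans (by omega)) (by omega)

lemma p_eq_map (α : ℝ) (q : ℕ → Polynomial ℂ) (hp : IsKernelNumeratorSeq α q) :
    ∀ j, q (j + 1) = (Pn j).map (evalRingHom (α : ℂ)) := by
  intro j
  induction j with
  | zero =>
    rw [hp.1]
    simp only [Pn, pA, Polynomial.map_add, Polynomial.map_mul, map_C, map_X,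
      coe_evalRingHom, eval_mul, eval_add, eval_pow, eval_ofNat, eval_natCast, eval_X, eval_one]
  | succ j ih =>
    rw [hp.2 (j+1) (by omega), ih]
    show _ = (pstep (j+1) (Pn j)).map (evalRingHom (α : ℂ))
    simp only [pstep, pA, Polynomial.map_add, Polynomial.map_mul, Polynomial.map_pow,
      Polynomial.map_sub, Polynomial.map_one, Polynomial.map_ofNat, map_C, map_X,
      derivative_map]
    simp only [coe_evalRingHom, eval_mul, eval_add, eval_pow, eval_ofNat, eval_natCast,
      eval_X, eval_one]

lemma eval_norm_le (q : Polynomial ℂ) (d : ℕ) (hq : q.natDegree ≤ d) (α : ℝ) (hα : 1 ≤ α) :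
    ‖q.eval (α : ℂ)‖ ≤ (∑ i ∈ Finset.range (d + 1), ‖q.coeff i‖) * α ^ d := by
  rw [eval_eq_sum_range' (lt_of_le_of_lt hq (Nat.lt_succ_self d))]
  calc ‖∑ i ∈ Finset.range (d+1), q.coeff i * (α:ℂ) ^ i‖
      ≤ ∑ i ∈ Finset.range (d+1), ‖q.coeff i * (α:ℂ) ^ i‖ := norm_sum_le _ _
    _ ≤ ∑ i ∈ Finset.range (d+1), ‖q.coeff i‖ * α ^ d := by
        refine Finset.sum_le_sum fun i hi => ?_
        rw [norm_mul, norm_pow, Complex.norm_real, Real.norm_of_nonneg (by linarith)]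
        refine mul_le_mul_of_nonneg_left ?_ (norm_nonneg _)
        exact pow_le_pow_right₀ (by linarith) (by
          simpa using Nat.lt_succ_iff.mp (Finset.mem_range.mp hi))
    _ = _ := by rw [Finset.sum_mul]

lemma top_eval (m : ℕ) (α : ℝ) (hα : 0 ≤ α) :
    ‖(topC m).eval (α : ℂ)‖ = 4 ^ m * ∏ t ∈ Finset.range m, (α + 2 + t) ^ 2 := by
  simp only [topC, pA, eval_mul, eval_pow, eval_prod, eval_add, eval_X, eval_natCast,
    eval_ofNat]
  rw [norm_mul, norm_pow, norm_prod (Finset.range m) (fun t => ((α:ℂ) + 2 + (t:ℂ)) ^ 2)]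
  have h4 : ‖(4:ℂ)‖ = 4 := by norm_num
  rw [h4]
  congr 1
  refine Finset.prod_congr rfl fun t _ => ?_
  rw [norm_pow]
  congr 1
  have : ((α : ℂ) + 2 + (t : ℂ)) = ((α + 2 + t : ℝ) : ℂ) := by push_cast; ring
  rw [this, Complex.norm_real, Real.norm_of_nonneg (by positivity)]

/-- As `α → ∞`, `|c_{α,n,n}| ≍ α^{2n}` and `|c_{α,n,k}| ≲ α^{2n-1}` for
`k < n`; consequently for all large `α`, `|c_{α,n,n}| > Σ_{k<n} |c_{α,n,k}|`. -/
theorem stmt10 (n : ℕ) (hn : 1 ≤ n) (p : ℝ → ℕ → Polynomial ℂ)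
    (hp : ∀ α : ℝ, IsKernelNumeratorSeq α (p α)) :
    (∃ c Cp A : ℝ, 0 < c ∧ 0 < Cp ∧ ∀ α : ℝ, A < α →
      (c * α ^ (2 * n) ≤ ‖(p α n).coeff n‖ ∧
        ‖(p α n).coeff n‖ ≤ Cp * α ^ (2 * n)) ∧
      ∀ k < n, ‖(p α n).coeff k‖ ≤ Cp * α ^ (2 * n - 1)) ∧
    ∃ α₀ : ℝ, -1 < α₀ ∧ ∀ α : ℝ, α₀ < α →
      ∑ k ∈ Finset.range n, ‖(p α n).coeff k‖ < ‖(p α n).coeff n‖ := by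
  obtain ⟨j, rfl⟩ : ∃ j, n = j + 1 := ⟨n - 1, by omega⟩
  have hco : ∀ (α : ℝ) (k : ℕ), (p α (j+1)).coeff k = ((Pn j).coeff k).eval (α:ℂ) := by
    intro α k
    rw [p_eq_map α (p α) (hp α) j, coeff_map, coe_evalRingHom]
  set c : ℝ := 4 ^ (j+1) with hc
  set S : ℕ → ℝ := fun k => ∑ i ∈ Finset.range (2*j+2), ‖((Pn j).coeff k).coeff i‖ with hS
  set Cp : ℝ := 4^(j+1) * ((j:ℝ)+3)^(2*(j+1)) + (∑ k ∈ Finset.range (j+1), S k) + 1 with hCp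
  have hc0 : 0 < c := by positivity
  have hSnn : ∀ k, 0 ≤ S k := fun k => Finset.sum_nonneg fun i _ => norm_nonneg _
  have hSsumnn : 0 ≤ ∑ k ∈ Finset.range (j+1), S k :=
    Finset.sum_nonneg fun k _ => hSnn k
  have hCp0 : 0 < Cp := by positivity
  -- the main estimates for α > 1
  have htop : ∀ α : ℝ, 0 ≤ α →
      ‖(p α (j+1)).coeff (j+1)‖ = 4^(j+1) * ∏ t ∈ Finset.range (j+1), (α+2+t)^2 := by
    intro α hα
    rw [hco, Pn_coeff_top, top_eval _ _ hα]
  have hlow : ∀ α : ℝ, 0 ≤ α → c * α ^ (2*(j+1)) ≤ ‖(p α (j+1)).coeff (j+1)‖ := by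
    intro α hα
    rw [htop α hα]
    have h1 : α ^ (2*(j+1)) = ∏ t ∈ Finset.range (j+1), α^2 := by
      rw [Finset.prod_const, Finset.card_range, ← pow_mul, mul_comm]
    rw [hc, h1]
    refine mul_le_mul_of_nonneg_left ?_ (by positivity)
    refine Finset.prod_le_prod (fun t _ => by positivity) (fun t _ => ?_)
    have ht : (0:ℝ) ≤ (t:ℝ) := Nat.cast_nonneg t
    refine pow_le_pow_left₀ hα (by linarith) 2
  have hup : ∀ α : ℝ, 1 ≤ α → ‖(p α (j+1)).coeff (j+1)‖ ≤ Cp * α ^ (2*(j+1)) := by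
    intro α hα
    rw [htop α (by linarith)]
    have h2 : ∀ t ∈ Finset.range (j+1), (α+2+(t:ℝ))^2 ≤ (((j:ℝ)+3)*α)^2 := by
      intro t ht
      have ht' : (t:ℝ) ≤ (j:ℝ) := by
        exact_mod_cast Nat.le_of_lt_succ (Finset.mem_range.mp ht)
      refine pow_le_pow_left₀ (by linarith) (by nlinarith) 2
    calc 4^(j+1) * ∏ t ∈ Finset.range (j+1), (α+2+(t:ℝ))^2
        ≤ 4^(j+1) * ∏ t ∈ Finset.range (j+1), (((j:ℝ)+3)*α)^2 := by
          refine mul_le_mul_of_nonneg_left ?_ (by positivity)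
          exact Finset.prod_le_prod (fun t _ => by positivity) h2
      _ = 4^(j+1) * ((j:ℝ)+3)^(2*(j+1)) * α ^ (2*(j+1)) := by
          rw [Finset.prod_const, Finset.card_range, ← pow_mul, mul_pow]
          ring
      _ ≤ Cp * α ^ (2*(j+1)) := by
          refine mul_le_mul_of_nonneg_right ?_ (by positivity)
          rw [hCp]; linarith
  have hlowk : ∀ α : ℝ, 1 ≤ α → ∀ k < j+1,
      ‖(p α (j+1)).coeff k‖ ≤ Cp * α ^ (2*j+1) := by
    intro α hα k hk
    rw [hco]
    calc ‖((Pn j).coeff k).eval (α:ℂ)‖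
        ≤ S k * α ^ (2*j+1) := by
          have := eval_norm_le ((Pn j).coeff k) (2*j+1)
            ((Pn_coeff_deg j k).trans (by omega)) α hα
          simpa [hS] using this
      _ ≤ Cp * α ^ (2*j+1) := by
          refine mul_le_mul_of_nonneg_right ?_ (by positivity)
          have h5 : S k ≤ ∑ k ∈ Finset.range (j+1), S k :=
            Finset.single_le_sum (fun i _ => hSnn i) (Finset.mem_range.mpr hk)
          have hpos : (0:ℝ) ≤ 4^(j+1) * ((j:ℝ)+3)^(2*(j+1)) := by positivity
          rw [hCp]; linarith
  constructor
  · refine ⟨c, Cp, 1, hc0, hCp0, fun α hα => ?_⟩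
    refine ⟨⟨hlow α (by linarith), hup α (by linarith)⟩, fun k hk => ?_⟩
    have h := hlowk α (by linarith) k hk
    have he : 2*(j+1) - 1 = 2*j+1 := by omega
    rw [he]
    exact h
  · refine ⟨1 + ((j:ℝ)+1) * Cp / c, by
      have : 0 ≤ ((j:ℝ)+1) * Cp / c := by positivity
      linarith, fun α hα => ?_⟩
    have hα1 : (1:ℝ) < α := by
      have : 0 ≤ ((j:ℝ)+1) * Cp / c := by positivity
      linarith
    have hsum : ∑ k ∈ Finset.range (j+1), ‖(p α (j+1)).coeff k‖
        ≤ ((j:ℝ)+1) * Cp * α ^ (2*j+1) := by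
      calc ∑ k ∈ Finset.range (j+1), ‖(p α (j+1)).coeff k‖
          ≤ ∑ k ∈ Finset.range (j+1), Cp * α ^ (2*j+1) :=
            Finset.sum_le_sum fun k hk =>
              hlowk α (le_of_lt hα1) k (Finset.mem_range.mp hk)
        _ = ((j:ℝ)+1) * Cp * α ^ (2*j+1) := by
            rw [Finset.sum_const, Finset.card_range]
            push_cast; ring
    have hstep : ((j:ℝ)+1) * Cp * α ^ (2*j+1) < c * α ^ (2*(j+1)) := by
      have hpow : (0:ℝ) < α ^ (2*j+1) := by positivity
      have h1 : ((j:ℝ)+1) * Cp < c * α := by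
        have h2 : c * α > c * (1 + ((j:ℝ)+1) * Cp / c) :=
          (mul_lt_mul_iff_right₀ hc0).mpr hα
        have h3 : c * (1 + ((j:ℝ)+1) * Cp / c) = c + ((j:ℝ)+1) * Cp := by
          field_simp
        nlinarith
      have he : 2*(j+1) = (2*j+1) + 1 := by omega
      rw [he, pow_succ]
      calc ((j:ℝ)+1) * Cp * α ^ (2*j+1) < (c * α) * α ^ (2*j+1) :=
            (mul_lt_mul_iff_left₀ hpow).mpr h1
        _ = c * (α ^ (2*j+1) * α) := by ring
    exact lt_of_le_of_lt hsum (lt_of_lt_of_le hstep (hlow α (by linarith)))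
end

section
/- For every n ∈ ℕ, there exists α > -1 and a point z in the open unit disk such that the rational function ξ ↦ p_{α,n}(z̄ξ)/(1 - z̄ξ)^{2+α+2n} has exactly n zeros (counting multiplicity) in the open unit disk, where p_{α,n} are the polynomials from the recursion p_{α,1}(ζ)=4(2+α)+4(2+α)²ζ, p_{α,m+1} = 4p_{α,m}'(1-ζ)² + 4(2+α+2m)p_{α,m}(1-ζ) + 4ζp_{α,m}''(1-ζ)² + 8(2+α+2m)ζp_{α,m}'(1-ζ) + 4(2+α+2m)(3+α+2m)ζp_{α,m}. -/
open Polynomial Metric Complex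

open Finset in

noncomputable def l1 (N : ℕ) (q : ℂ[X]) : ℝ := ∑ k ∈ Finset.range N, ‖q.coeff k‖

lemma l1_nonneg (N : ℕ) (q : ℂ[X]) : 0 ≤ l1 N q :=
  Finset.sum_nonneg fun _ _ => norm_nonneg _

lemma l1_mono {N N' : ℕ} (h : N ≤ N') (q : ℂ[X]) : l1 N q ≤ l1 N' q :=
  Finset.sum_le_sum_of_subset_of_nonneg (Finset.range_subset_range.mpr h)
    (fun _ _ _ => norm_nonneg _)

lemma l1_add (N : ℕ) (a b : ℂ[X]) : l1 N (a + b) ≤ l1 N a + l1 N b := by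
  simp only [l1, ← Finset.sum_add_distrib]
  exact Finset.sum_le_sum fun k _ => by simpa using norm_add_le (a.coeff k) (b.coeff k)

lemma l1_C_mul (N : ℕ) (a : ℂ) (q : ℂ[X]) : l1 N (C a * q) = ‖a‖ * l1 N q := by
  rw [l1, l1, Finset.mul_sum]
  exact Finset.sum_congr rfl fun k _ => by rw [coeff_C_mul, norm_mul]

lemma l1_mul_X (N : ℕ) (q : ℂ[X]) : l1 (N + 1) (q * X) = l1 N q := by
  rw [l1, Finset.sum_range_succ']
  simp only [coeff_mul_X, coeff_mul_X_zero, norm_zero, add_zero, l1]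

lemma l1_mul_X_le (N : ℕ) (q : ℂ[X]) : l1 N (q * X) ≤ l1 N q :=
  (l1_mono (Nat.le_succ N) _).trans (le_of_eq (l1_mul_X N q))

lemma l1_shift (N : ℕ) (q : ℂ[X]) :
    ∑ k ∈ Finset.range N, ‖q.coeff (k + 1)‖ ≤ l1 (N + 1) q := by
  rw [l1, Finset.sum_range_succ']
  simpa using norm_nonneg (q.coeff 0)

lemma l1_deriv (N : ℕ) (q : ℂ[X]) : l1 N (derivative q) ≤ N * l1 (N + 1) q := by
  have h1 : l1 N (derivative q) ≤ ∑ k ∈ Finset.range N, (N : ℝ) * ‖q.coeff (k + 1)‖ := by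
    refine Finset.sum_le_sum fun k hk => ?_
    rw [coeff_derivative, norm_mul]
    have h2 : ‖((k : ℂ) + 1)‖ ≤ (N : ℝ) := by
      rw [show ((k : ℂ) + 1) = ((k + 1 : ℕ) : ℂ) by push_cast; ring, Complex.norm_natCast]
      exact_mod_cast Finset.mem_range.mp hk
    calc ‖q.coeff (k + 1)‖ * ‖((k:ℂ) + 1)‖ ≤ ‖q.coeff (k + 1)‖ * N :=
          mul_le_mul_of_nonneg_left h2 (norm_nonneg _)
      _ = N * ‖q.coeff (k + 1)‖ := mul_comm _ _
  rw [← Finset.mul_sum] at h1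
  exact h1.trans (mul_le_mul_of_nonneg_left (l1_shift N q) (Nat.cast_nonneg N))

lemma l1_stable {M N : ℕ} (q : ℂ[X]) (hq : q.natDegree < M) (h : M ≤ N) :
    l1 N q = l1 M q := by
  rw [l1, l1, ← Finset.sum_subset (Finset.range_subset_range.mpr h)]
  intro k hk hk'
  have : M ≤ k := le_of_not_gt (Finset.mem_range.not.mp hk')
  rw [Polynomial.coeff_eq_zero_of_natDegree_lt (lt_of_lt_of_le hq this), norm_zero]


lemma expandRec (α : ℝ) (p : ℕ → Polynomial ℂ) (hp : IsKernelNumeratorSeq α (p))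
    (m : ℕ) (hm : 1 ≤ m) :
    p (m + 1) =
      C 4 * derivative (p m) - C 8 * (derivative (p m) * X)
        + C 4 * (derivative (p m) * X * X)
      + C (4 * (2 + (α:ℂ) + 2 * (m:ℂ))) * p m
      - C (4 * (2 + (α:ℂ) + 2 * (m:ℂ))) * (p m * X)
      + C 4 * (derivative (derivative (p m)) * X)
      - C 8 * (derivative (derivative (p m)) * X * X)
      + C 4 * (derivative (derivative (p m)) * X * X * X)
      + C (8 * (2 + (α:ℂ) + 2 * (m:ℂ))) * (derivative (p m) * X)
      - C (8 * (2 + (α:ℂ) + 2 * (m:ℂ))) * (derivative (p m) * X * X)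
      + C (4 * (2 + (α:ℂ) + 2 * (m:ℂ)) * (3 + (α:ℂ) + 2 * (m:ℂ))) * (p m * X) := by
  rw [hp.2 m hm]
  simp only [map_mul, map_add, map_ofNat, map_one]
  ring

lemma natDeg_le (α : ℝ) (p : ℕ → Polynomial ℂ) (hp : IsKernelNumeratorSeq α (p)) :
    ∀ m, 1 ≤ m → (p m).natDegree ≤ m := by
  intro m hm
  induction m, hm using Nat.le_induction with
  | base =>
    rw [hp.1]
    compute_degree
  | succ m hm ih =>
    rw [hp.2 m hm]
    have h1X : (1 - X : Polynomial ℂ).natDegree ≤ 1 := (natDegree_sub_le _ _).trans (by simp)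
    have h1X2 : ((1 - X : Polynomial ℂ) ^ 2).natDegree ≤ 2 :=
      (natDegree_pow_le).trans (by omega)
    have hd1 : (derivative (p m)).natDegree ≤ m - 1 :=
      (natDegree_derivative_le _).trans (Nat.sub_le_sub_right ih 1)
    have hT1 : (4 * derivative (p m) * (1 - X) ^ 2).natDegree ≤ m + 1 := by
      have h4 : ((4 : Polynomial ℂ) * derivative (p m)).natDegree ≤ m - 1 :=
        natDegree_mul_le.trans (by simpa using hd1)
      have := natDegree_mul_le (p := 4 * derivative (p m)) (q := (1 - X) ^ 2)
      omega
    have hT2 : (C (4 * (2 + (α:ℂ) + 2 * (m:ℂ))) * p m * (1 - X)).natDegree ≤ m + 1 := by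
      have h4 : (C (4 * (2 + (α:ℂ) + 2 * (m:ℂ))) * p m).natDegree ≤ m :=
        (natDegree_C_mul_le _ _).trans ih
      have := natDegree_mul_le (p := C (4 * (2 + (α:ℂ) + 2 * (m:ℂ))) * p m) (q := 1 - X)
      omega
    have hT3 : (4 * X * derivative (derivative (p m)) * (1 - X) ^ 2).natDegree ≤ m + 1 := by
      rcases Nat.lt_or_ge m 2 with h2 | h2
      · interval_cases m
        have hdd : derivative (derivative (p 1)) = 0 := by
          rw [hp.1, derivative_add, derivative_C, derivative_C_mul, derivative_X,
            zero_add, mul_one, derivative_C]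
        rw [hdd]
        simp
      · have hd2 : (derivative (derivative (p m))).natDegree ≤ m - 2 := by
          have := (natDegree_derivative_le (p := derivative (p m))).trans
            (Nat.sub_le_sub_right hd1 1)
          omega
        have h4X : ((4 : Polynomial ℂ) * X).natDegree ≤ 1 := natDegree_mul_le.trans (by simp)
        have ha : ((4 : Polynomial ℂ) * X * derivative (derivative (p m))).natDegree ≤ m - 1 := by
          have := natDegree_mul_le (p := (4 : Polynomial ℂ) * X)
            (q := derivative (derivative (p m)))
          omega
        have := natDegree_mul_le (p := 4 * X * derivative (derivative (p m)))
          (q := (1 - X) ^ 2)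
        omega
    have hT4 : (C (8 * (2 + (α:ℂ) + 2 * (m:ℂ))) * X * derivative (p m) * (1 - X)).natDegree
        ≤ m + 1 := by
      have h1 : (C (8 * (2 + (α:ℂ) + 2 * (m:ℂ))) * X).natDegree ≤ 1 :=
        (natDegree_C_mul_le _ _).trans natDegree_X_le
      have h2 : (C (8 * (2 + (α:ℂ) + 2 * (m:ℂ))) * X * derivative (p m)).natDegree ≤ m := by
        have := natDegree_mul_le (p := C (8 * (2 + (α:ℂ) + 2 * (m:ℂ))) * X)
          (q := derivative (p m))
        omega
      have := natDegree_mul_le (p := C (8 * (2 + (α:ℂ) + 2 * (m:ℂ))) * X * derivative (p m))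
        (q := 1 - X)
      omega
    have hT5 : (C (4 * (2 + (α:ℂ) + 2 * (m:ℂ)) * (3 + (α:ℂ) + 2 * (m:ℂ))) * X * p m).natDegree
        ≤ m + 1 := by
      have h1 : (C (4 * (2 + (α:ℂ) + 2 * (m:ℂ)) * (3 + (α:ℂ) + 2 * (m:ℂ))) * X).natDegree ≤ 1 :=
        (natDegree_C_mul_le _ _).trans natDegree_X_le
      have := natDegree_mul_le
        (p := C (4 * (2 + (α:ℂ) + 2 * (m:ℂ)) * (3 + (α:ℂ) + 2 * (m:ℂ))) * X) (q := p m)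
      omega
    exact (natDegree_add_le _ _).trans (max_le ((natDegree_add_le _ _).trans
      (max_le ((natDegree_add_le _ _).trans (max_le ((natDegree_add_le _ _).trans
      (max_le hT1 hT2)) hT3)) hT4)) hT5)

lemma lead_coeff (α : ℝ) (p : ℕ → Polynomial ℂ) (hp : IsKernelNumeratorSeq α (p)) (l : ℕ) :
    (p (l + 2)).coeff (l + 2) =
      (4 * ((l:ℂ) + 1) ^ 2 + 4 * (2 + (α:ℂ) + 2 * ((l:ℂ) + 1)) * (2 + (α:ℂ)))
        * (p (l + 1)).coeff (l + 1) := by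
  have hnd : (p (l + 1)).natDegree ≤ l + 1 := natDeg_le α p hp (l + 1) (by omega)
  set q := p (l + 1) with hq
  have h2 : q.coeff (l + 2) = 0 := coeff_eq_zero_of_natDegree_lt (by omega)
  have h3 : q.coeff (l + 3) = 0 := coeff_eq_zero_of_natDegree_lt (by omega)
  have e := expandRec α p hp (l + 1) (by omega)
  rw [← hq] at e
  have h8 : (derivative (derivative q) * X).coeff l
      = (l : ℂ) * ((l : ℂ) + 1) * q.coeff (l + 1) := by
    rcases l with _ | j
    · simp [coeff_mul_X_zero]
    · have c0 : (derivative (derivative q) * X).coeff (j + 1)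
          = (derivative (derivative q)).coeff j := coeff_mul_X (derivative (derivative q)) j
      rw [c0, coeff_derivative, coeff_derivative]
      push_cast
      all_goals ring
  have c1 : (derivative q * X * X).coeff (l + 2) = (derivative q * X).coeff (l + 1) :=
    coeff_mul_X (derivative q * X) (l + 1)
  have c2 : (derivative (derivative q) * X * X * X).coeff (l + 2)
      = (derivative (derivative q) * X * X).coeff (l + 1) :=
    coeff_mul_X (derivative (derivative q) * X * X) (l + 1)
  have c3 : (derivative (derivative q) * X * X).coeff (l + 2)
      = (derivative (derivative q) * X).coeff (l + 1) :=
    coeff_mul_X (derivative (derivative q) * X) (l + 1)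
  have c4 : (derivative q * X).coeff (l + 2) = (derivative q).coeff (l + 1) :=
    coeff_mul_X (derivative q) (l + 1)
  have c5 : (derivative (derivative q) * X).coeff (l + 2)
      = (derivative (derivative q)).coeff (l + 1) :=
    coeff_mul_X (derivative (derivative q)) (l + 1)
  have c6 : (q * X).coeff (l + 2) = q.coeff (l + 1) := coeff_mul_X q (l + 1)
  have c7 : (derivative q * X).coeff (l + 1) = (derivative q).coeff l :=
    coeff_mul_X (derivative q) l
  have c8 : (derivative (derivative q) * X * X).coeff (l + 1)
      = (derivative (derivative q) * X).coeff l :=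
    coeff_mul_X (derivative (derivative q) * X) l
  have d1 : (derivative q).coeff (l + 2) = q.coeff (l + 3) * ((l : ℂ) + 3) := by
    rw [coeff_derivative]; push_cast; all_goals ring
  have d2 : (derivative q).coeff (l + 1) = q.coeff (l + 2) * ((l : ℂ) + 2) := by
    rw [coeff_derivative]; push_cast; all_goals ring
  have d3 : (derivative q).coeff l = q.coeff (l + 1) * ((l : ℂ) + 1) := by
    rw [coeff_derivative]
  have d4 : (derivative (derivative q)).coeff (l + 1)
      = (derivative q).coeff (l + 2) * ((l : ℂ) + 2) := by
    rw [coeff_derivative]; push_cast; all_goals ring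
  have c9 : (derivative (derivative q) * X).coeff (l + 1)
      = (derivative (derivative q)).coeff l :=
    coeff_mul_X (derivative (derivative q)) l
  have d5 : (derivative (derivative q)).coeff l
      = (derivative q).coeff (l + 1) * ((l : ℂ) + 1) := by
    rw [coeff_derivative]
  rw [e]
  simp only [coeff_add, coeff_sub, coeff_C_mul]
  rw [c1, c2, c3, c4, c5, c6, c7, c8, c9, h8, d4, d5, d1, d2, d3, h2, h3]
  push_cast
  ring

lemma l1_sub (N : ℕ) (a b : Polynomial ℂ) : l1 N (a - b) ≤ l1 N a + l1 N b := by
  have hneg : l1 N (-b) = l1 N b := by simp [l1, coeff_neg]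
  rw [sub_eq_add_neg]
  exact (l1_add N a (-b)).trans (by rw [hneg])

set_option maxHeartbeats 2000000 in
lemma l1_step (α : ℝ) (p : ℕ → Polynomial ℂ) (hp : IsKernelNumeratorSeq α (p))
    (m : ℕ) (hm : 1 ≤ m) (hα : 1 ≤ α) :
    l1 (m + 1) (p (m + 1)) ≤
      100 * ((m:ℝ) + 2) ^ 2 * (α + 3) * l1 (m + 1) (p m)
        + 4 * (2 * (m:ℝ) + 3) ^ 2 * (α + 3) ^ 2 * l1 m (p m) := by
  have hnd : (p m).natDegree ≤ m := natDeg_le α p hp m hm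
  set q := p m with hq
  have e := expandRec α p hp m hm
  rw [← hq] at e
  have hM : (0:ℝ) ≤ (m:ℝ) := Nat.cast_nonneg m
  have hT0 : 0 ≤ l1 (m + 1) q := l1_nonneg _ _
  have hS0 : 0 ≤ l1 m q := l1_nonneg _ _
  have hn4 : ‖(4:ℂ)‖ = 4 := by simp
  have hn8 : ‖(8:ℂ)‖ = 8 := by simp
  have hAA : ‖(2 + (α:ℂ) + 2 * (m:ℂ))‖ = 2 + α + 2 * (m:ℝ) := by
    rw [show (2 + (α:ℂ) + 2 * (m:ℂ)) = ((2 + α + 2 * (m:ℝ) : ℝ) : ℂ) by push_cast; ring]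
    rw [Complex.norm_real]
    exact abs_of_nonneg (by linarith)
  have hBB : ‖(3 + (α:ℂ) + 2 * (m:ℂ))‖ = 3 + α + 2 * (m:ℝ) := by
    rw [show (3 + (α:ℂ) + 2 * (m:ℂ)) = ((3 + α + 2 * (m:ℝ) : ℝ) : ℂ) by push_cast; ring]
    rw [Complex.norm_real]
    exact abs_of_nonneg (by linarith)
  have hAAnn : (0:ℝ) ≤ 2 + α + 2 * (m:ℝ) := by linarith
  have hstab : l1 (m + 1 + 1) q = l1 (m + 1) q := l1_stable q (by omega) (by omega)
  have hq' : l1 (m + 1) (derivative q) ≤ ((m:ℝ) + 1) * l1 (m + 1) q := by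
    have h := l1_deriv (m + 1) q
    rw [hstab] at h
    rwa [show ((m + 1 : ℕ) : ℝ) = (m:ℝ) + 1 by push_cast; ring] at h
  have hdnd : (derivative q).natDegree ≤ m - 1 :=
    (natDegree_derivative_le q).trans (Nat.sub_le_sub_right hnd 1)
  have hstab' : l1 (m + 1 + 1) (derivative q) = l1 (m + 1) (derivative q) :=
    l1_stable (derivative q) (by omega) (by omega)
  have hq'' : l1 (m + 1) (derivative (derivative q))
      ≤ ((m:ℝ) + 1) * (((m:ℝ) + 1) * l1 (m + 1) q) := by
    have h := l1_deriv (m + 1) (derivative q)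
    rw [hstab', show ((m + 1 : ℕ) : ℝ) = (m:ℝ) + 1 by push_cast; ring] at h
    exact h.trans (mul_le_mul_of_nonneg_left hq' (by linarith))
  have bDer : l1 (m + 1) (C (4:ℂ) * derivative q) ≤ 4 * (((m:ℝ) + 1) * l1 (m + 1) q) := by
    rw [l1_C_mul, hn4]
    exact mul_le_mul_of_nonneg_left hq' (by norm_num)
  have bDerX : l1 (m + 1) (C (8:ℂ) * (derivative q * X))
      ≤ 8 * (((m:ℝ) + 1) * l1 (m + 1) q) := by
    rw [l1_C_mul, hn8]
    exact mul_le_mul_of_nonneg_left ((l1_mul_X_le _ _).trans hq') (by norm_num)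
  have bDerXX : l1 (m + 1) (C (4:ℂ) * (derivative q * X * X))
      ≤ 4 * (((m:ℝ) + 1) * l1 (m + 1) q) := by
    rw [l1_C_mul, hn4]
    exact mul_le_mul_of_nonneg_left
      (((l1_mul_X_le _ _).trans (l1_mul_X_le _ _)).trans hq') (by norm_num)
  have b1 := bDer
  have b3 := bDerXX
  have b4 : l1 (m + 1) (C (4 * (2 + (α:ℂ) + 2 * (m:ℂ))) * q)
      ≤ (4 * (2 + α + 2 * (m:ℝ))) * l1 (m + 1) q := by
    rw [l1_C_mul, norm_mul, hn4, hAA]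
  have b5 : l1 (m + 1) (C (4 * (2 + (α:ℂ) + 2 * (m:ℂ))) * (q * X))
      ≤ (4 * (2 + α + 2 * (m:ℝ))) * l1 (m + 1) q := by
    rw [l1_C_mul, norm_mul, hn4, hAA]
    exact mul_le_mul_of_nonneg_left (l1_mul_X_le _ _) (by linarith)
  have b6 : l1 (m + 1) (C (4:ℂ) * (derivative (derivative q) * X))
      ≤ 4 * (((m:ℝ) + 1) * (((m:ℝ) + 1) * l1 (m + 1) q)) := by
    rw [l1_C_mul, hn4]
    exact mul_le_mul_of_nonneg_left ((l1_mul_X_le _ _).trans hq'') (by norm_num)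
  have b7 : l1 (m + 1) (C (8:ℂ) * (derivative (derivative q) * X * X))
      ≤ 8 * (((m:ℝ) + 1) * (((m:ℝ) + 1) * l1 (m + 1) q)) := by
    rw [l1_C_mul, hn8]
    exact mul_le_mul_of_nonneg_left
      (((l1_mul_X_le _ _).trans (l1_mul_X_le _ _)).trans hq'') (by norm_num)
  have b8 : l1 (m + 1) (C (4:ℂ) * (derivative (derivative q) * X * X * X))
      ≤ 4 * (((m:ℝ) + 1) * (((m:ℝ) + 1) * l1 (m + 1) q)) := by
    rw [l1_C_mul, hn4]
    exact mul_le_mul_of_nonneg_left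
      ((((l1_mul_X_le _ _).trans (l1_mul_X_le _ _)).trans (l1_mul_X_le _ _)).trans hq'')
      (by norm_num)
  have b9 : l1 (m + 1) (C (8 * (2 + (α:ℂ) + 2 * (m:ℂ))) * (derivative q * X))
      ≤ (8 * (2 + α + 2 * (m:ℝ))) * (((m:ℝ) + 1) * l1 (m + 1) q) := by
    rw [l1_C_mul, norm_mul, hn8, hAA]
    exact mul_le_mul_of_nonneg_left ((l1_mul_X_le _ _).trans hq') (by linarith)
  have b10 : l1 (m + 1) (C (8 * (2 + (α:ℂ) + 2 * (m:ℂ))) * (derivative q * X * X))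
      ≤ (8 * (2 + α + 2 * (m:ℝ))) * (((m:ℝ) + 1) * l1 (m + 1) q) := by
    rw [l1_C_mul, norm_mul, hn8, hAA]
    exact mul_le_mul_of_nonneg_left
      (((l1_mul_X_le _ _).trans (l1_mul_X_le _ _)).trans hq') (by linarith)
  have b11 : l1 (m + 1) (C (4 * (2 + (α:ℂ) + 2 * (m:ℂ)) * (3 + (α:ℂ) + 2 * (m:ℂ))) * (q * X))
      ≤ 4 * (2 + α + 2 * (m:ℝ)) * (3 + α + 2 * (m:ℝ)) * l1 m q := by
    rw [l1_C_mul, norm_mul, norm_mul, hn4, hAA, hBB, l1_mul_X m q]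
  have b2 := bDerX
  have hsplit : l1 (m + 1) (p (m + 1)) ≤ l1 (m + 1) (C 4 * derivative q) + l1 (m + 1) (C 8 * (derivative q * X)) + l1 (m + 1) (C 4 * (derivative q * X * X)) + l1 (m + 1) (C (4 * (2 + (α:ℂ) + 2 * (m:ℂ))) * q) + l1 (m + 1) (C (4 * (2 + (α:ℂ) + 2 * (m:ℂ))) * (q * X)) + l1 (m + 1) (C 4 * (derivative (derivative q) * X)) + l1 (m + 1) (C 8 * (derivative (derivative q) * X * X)) + l1 (m + 1) (C 4 * (derivative (derivative q) * X * X * X)) + l1 (m + 1) (C (8 * (2 + (α:ℂ) + 2 * (m:ℂ))) * (derivative q * X)) + l1 (m + 1) (C (8 * (2 + (α:ℂ) + 2 * (m:ℂ))) * (derivative q * X * X)) + l1 (m + 1) (C (4 * (2 + (α:ℂ) + 2 * (m:ℂ)) * (3 + (α:ℂ) + 2 * (m:ℂ))) * (q * X)) := by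
    rw [e]
    refine (l1_add _ _ _).trans (add_le_add ?_ le_rfl)
    refine (l1_sub _ _ _).trans (add_le_add ?_ le_rfl)
    refine (l1_add _ _ _).trans (add_le_add ?_ le_rfl)
    refine (l1_add _ _ _).trans (add_le_add ?_ le_rfl)
    refine (l1_sub _ _ _).trans (add_le_add ?_ le_rfl)
    refine (l1_add _ _ _).trans (add_le_add ?_ le_rfl)
    refine (l1_sub _ _ _).trans (add_le_add ?_ le_rfl)
    refine (l1_add _ _ _).trans (add_le_add ?_ le_rfl)
    refine (l1_add _ _ _).trans (add_le_add ?_ le_rfl)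
    refine (l1_sub _ _ _).trans (add_le_add ?_ le_rfl)
    exact le_rfl
  have hcomb : (l1 (m + 1) (C 4 * derivative q) + l1 (m + 1) (C 8 * (derivative q * X)) + l1 (m + 1) (C 4 * (derivative q * X * X)) + l1 (m + 1) (C (4 * (2 + (α:ℂ) + 2 * (m:ℂ))) * q) + l1 (m + 1) (C (4 * (2 + (α:ℂ) + 2 * (m:ℂ))) * (q * X)) + l1 (m + 1) (C 4 * (derivative (derivative q) * X)) + l1 (m + 1) (C 8 * (derivative (derivative q) * X * X)) + l1 (m + 1) (C 4 * (derivative (derivative q) * X * X * X)) + l1 (m + 1) (C (8 * (2 + (α:ℂ) + 2 * (m:ℂ))) * (derivative q * X)) + l1 (m + 1) (C (8 * (2 + (α:ℂ) + 2 * (m:ℂ))) * (derivative q * X * X)) + l1 (m + 1) (C (4 * (2 + (α:ℂ) + 2 * (m:ℂ)) * (3 + (α:ℂ) + 2 * (m:ℂ))) * (q * X)) : ℝ) ≤ (4 * (((m:ℝ) + 1) * l1 (m + 1) q)) + (8 * (((m:ℝ) + 1) * l1 (m + 1) q)) + (4 * (((m:ℝ) + 1) * l1 (m + 1) q)) + ((4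 * (2 + α + 2 * (m:ℝ))) * l1 (m + 1) q) + ((4 * (2 + α + 2 * (m:ℝ))) * l1 (m + 1) q) + (4 * (((m:ℝ) + 1) * (((m:ℝ) + 1) * l1 (m + 1) q))) + (8 * (((m:ℝ) + 1) * (((m:ℝ) + 1) * l1 (m + 1) q))) + (4 * (((m:ℝ) + 1) * (((m:ℝ) + 1) * l1 (m + 1) q))) + ((8 * (2 + α + 2 * (m:ℝ))) * (((m:ℝ) + 1) * l1 (m + 1) q)) + ((8 * (2 + α + 2 * (m:ℝ))) * (((m:ℝ) + 1) * l1 (m + 1) q)) + (4 * (2 + α + 2 * (m:ℝ)) * (3 + α + 2 * (m:ℝ)) * l1 m q) := add_le_add (add_le_add (add_le_add (add_le_add (add_le_add (add_le_add (add_le_add (add_le_add (add_le_add (add_le_add (b1) bDerX) bDerXX) b4) b5) b6) b7) b8) b9) b10) b11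
  have hTcoef : 16 * ((m:ℝ) + 1) + 16 * ((m:ℝ) + 1) ^ 2
      + 8 * (2 + α + 2 * (m:ℝ))
      + 16 * (2 + α + 2 * (m:ℝ)) * ((m:ℝ) + 1)
      ≤ 100 * ((m:ℝ) + 2) ^ 2 * (α + 3) := by
    have ha : (0:ℝ) ≤ α - 1 := by linarith
    nlinarith [mul_nonneg hM hM, mul_nonneg (mul_nonneg hM hM) ha, mul_nonneg hM ha, ha, hM]
  have hScoef : 4 * (2 + α + 2 * (m:ℝ)) * (3 + α + 2 * (m:ℝ))
      ≤ 4 * (2 * (m:ℝ) + 3) ^ 2 * (α + 3) ^ 2 := by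
    have ha : (0:ℝ) ≤ α - 1 := by linarith
    nlinarith [mul_nonneg hM hM, mul_nonneg ha ha, mul_nonneg ha hM,
      mul_nonneg (mul_nonneg ha hM) hM, mul_nonneg (mul_nonneg ha ha) hM,
      mul_nonneg (mul_nonneg (mul_nonneg ha ha) hM) hM, ha, hM]
  have hT := mul_le_mul_of_nonneg_right hTcoef hT0
  have hS := mul_le_mul_of_nonneg_right hScoef hS0
  refine (hsplit.trans hcomb).trans ?_
  linarith [hT, hS]

set_option maxHeartbeats 2000000 in
lemma keyBound (p : ℝ → ℕ → Polynomial ℂ) (hp : ∀ α, IsKernelNumeratorSeq α (p α)) (l : ℕ) :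
    ∃ C : ℝ, 1 ≤ C ∧ ∀ α : ℝ, 1 ≤ α →
      l1 (l + 1) (p α (l + 1)) ≤ C * (α + 3) ^ (2 * l + 1) ∧
      ‖(p α (l + 1)).coeff (l + 1)‖ ≤ C * (α + 3) ^ (2 * l + 2) ∧
      (α + 2) ^ (2 * l + 2) ≤ ‖(p α (l + 1)).coeff (l + 1)‖ := by
  induction l with
  | zero =>
    refine ⟨4, by norm_num, fun α hα => ?_⟩
    have h0 : (p α 1).coeff 0 = 4 * (2 + (α:ℂ)) := by
      rw [(hp α).1, coeff_add, coeff_C_mul, coeff_X_zero, coeff_C]; simp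
    have h1 : (p α 1).coeff 1 = 4 * (2 + (α:ℂ)) ^ 2 := by
      rw [(hp α).1, coeff_add, coeff_C_mul, coeff_X_one, coeff_C]; simp
    have hl1 : l1 1 (p α 1) = ‖(p α 1).coeff 0‖ := by
      rw [l1, Finset.sum_range_one]
    have hn0 : ‖(4 * (2 + (α:ℂ)))‖ = 4 * (2 + α) := by
      rw [show (4 * (2 + (α:ℂ))) = ((4 * (2 + α) : ℝ) : ℂ) by push_cast; ring,
        Complex.norm_real]
      exact abs_of_nonneg (by linarith)
    have hn1 : ‖(4 * (2 + (α:ℂ)) ^ 2)‖ = 4 * (2 + α) ^ 2 := by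
      rw [show (4 * (2 + (α:ℂ)) ^ 2) = ((4 * (2 + α) ^ 2 : ℝ) : ℂ) by push_cast; ring,
        Complex.norm_real]
      exact abs_of_nonneg (by nlinarith)
    refine ⟨?_, ?_, ?_⟩
    · rw [hl1, h0, hn0]; norm_num; nlinarith
    · rw [h1, hn1]; norm_num; nlinarith
    · rw [h1, hn1]; norm_num; nlinarith
  | succ l ih =>
    obtain ⟨C, hC1, hC⟩ := ih
    have hl0 : (0:ℝ) ≤ (l:ℝ) := Nat.cast_nonneg l
    refine ⟨(200 * ((l:ℝ) + 3) ^ 2 + 4 * (2 * (l:ℝ) + 5) ^ 2 + ((l:ℝ) + 1) ^ 2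
        + 4 * (2 * (l:ℝ) + 5)) * C, by nlinarith, fun α hα => ?_⟩
    obtain ⟨hCa, hCb, hCc⟩ := hC α hα
    have hC0 : (0:ℝ) ≤ C := by linarith
    have ha3 : (4:ℝ) ≤ α + 3 := by linarith
    have ha2 : (0:ℝ) ≤ α + 2 := by linarith
    have hQ0 : (0:ℝ) < α + 3 := by linarith
    have hstep := l1_step α (p α) (hp α) (l + 1) (by omega) hα
    push_cast at hstep
    have hsplit : l1 (l + 1 + 1) (p α (l + 1))
        = l1 (l + 1) (p α (l + 1)) + ‖(p α (l + 1)).coeff (l + 1)‖ := by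
      rw [l1, Finset.sum_range_succ]; rfl
    have hpowmono : (α + 3) ^ (2 * l + 1) ≤ (α + 3) ^ (2 * l + 2) :=
      pow_le_pow_right₀ (by linarith) (by omega)
    have A1 : l1 (l + 1 + 1) (p α (l + 1)) ≤ 2 * C * (α + 3) ^ (2 * l + 2) := by
      rw [hsplit]
      have := mul_le_mul_of_nonneg_left hpowmono hC0
      linarith
    -- part (a)
    have parta : l1 (l + 1 + 1) (p α (l + 1 + 1)) ≤
        (200 * ((l:ℝ) + 3) ^ 2 + 4 * (2 * (l:ℝ) + 5) ^ 2 + ((l:ℝ) + 1) ^ 2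
          + 4 * (2 * (l:ℝ) + 5)) * C * (α + 3) ^ (2 * (l + 1) + 1) := by
      refine hstep.trans ?_
      have f1 : 100 * ((l:ℝ) + 1 + 2) ^ 2 * (α + 3) * l1 (l + 1 + 1) (p α (l + 1))
          ≤ 100 * ((l:ℝ) + 1 + 2) ^ 2 * (α + 3) * (2 * C * (α + 3) ^ (2 * l + 2)) :=
        mul_le_mul_of_nonneg_left A1 (by positivity)
      have f2 : 4 * (2 * ((l:ℝ) + 1) + 3) ^ 2 * (α + 3) ^ 2 * l1 (l + 1) (p α (l + 1))
          ≤ 4 * (2 * ((l:ℝ) + 1) + 3) ^ 2 * (α + 3) ^ 2 * (C * (α + 3) ^ (2 * l + 1)) :=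
        mul_le_mul_of_nonneg_left hCa (by positivity)
      have f3 : 100 * ((l:ℝ) + 1 + 2) ^ 2 * (α + 3) * (2 * C * (α + 3) ^ (2 * l + 2))
          + 4 * (2 * ((l:ℝ) + 1) + 3) ^ 2 * (α + 3) ^ 2 * (C * (α + 3) ^ (2 * l + 1))
          ≤ (200 * ((l:ℝ) + 3) ^ 2 + 4 * (2 * (l:ℝ) + 5) ^ 2 + ((l:ℝ) + 1) ^ 2
            + 4 * (2 * (l:ℝ) + 5)) * C * (α + 3) ^ (2 * (l + 1) + 1) := by
        have e1 : (α + 3) ^ (2 * (l + 1) + 1)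
            = (α + 3) ^ (2 * l + 1) * (α + 3) ^ 2 := by ring
        have e2 : (α + 3) ^ (2 * l + 2) = (α + 3) ^ (2 * l + 1) * (α + 3) :=
          pow_succ (α + 3) (2 * l + 1)
        rw [e1, e2]
        have hP : (0:ℝ) ≤ (α + 3) ^ (2 * l + 1) := by positivity
        nlinarith [mul_nonneg (mul_nonneg hC0 hP) hQ0.le,
          mul_nonneg (mul_nonneg (mul_nonneg hC0 hP) hQ0.le) hQ0.le,
          mul_nonneg hl0 (mul_nonneg (mul_nonneg hC0 hP) (mul_nonneg hQ0.le hQ0.le)),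
          mul_nonneg (mul_nonneg hl0 hl0) (mul_nonneg (mul_nonneg hC0 hP)
            (mul_nonneg hQ0.le hQ0.le)),
          mul_nonneg hl0 (mul_nonneg (mul_nonneg hC0 hP) hQ0.le)]
      linarith
    -- leading coefficient
    have hlead := lead_coeff α (p α) (hp α) l
    have hfacval : (4 * ((l:ℂ) + 1) ^ 2 + 4 * (2 + (α:ℂ) + 2 * ((l:ℂ) + 1)) * (2 + (α:ℂ)))
        = (((4 * ((l:ℝ) + 1) ^ 2 + 4 * (2 + α + 2 * ((l:ℝ) + 1)) * (2 + α)) : ℝ) : ℂ) := by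
      push_cast; ring
    have hfacnn : (0:ℝ) ≤ 4 * ((l:ℝ) + 1) ^ 2 + 4 * (2 + α + 2 * ((l:ℝ) + 1)) * (2 + α) := by
      nlinarith
    have hfac : ‖(4 * ((l:ℂ) + 1) ^ 2 + 4 * (2 + (α:ℂ) + 2 * ((l:ℂ) + 1)) * (2 + (α:ℂ)))‖
        = 4 * ((l:ℝ) + 1) ^ 2 + 4 * (2 + α + 2 * ((l:ℝ) + 1)) * (2 + α) := by
      rw [hfacval, Complex.norm_real]
      exact abs_of_nonneg hfacnn
    have hnorm : ‖(p α (l + 1 + 1)).coeff (l + 1 + 1)‖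
        = (4 * ((l:ℝ) + 1) ^ 2 + 4 * (2 + α + 2 * ((l:ℝ) + 1)) * (2 + α))
          * ‖(p α (l + 1)).coeff (l + 1)‖ := by
      rw [show (l + 1 + 1) = (l + 2) from rfl, hlead, norm_mul, hfac]
    -- part (b)
    have partb : ‖(p α (l + 1 + 1)).coeff (l + 1 + 1)‖ ≤
        (200 * ((l:ℝ) + 3) ^ 2 + 4 * (2 * (l:ℝ) + 5) ^ 2 + ((l:ℝ) + 1) ^ 2
          + 4 * (2 * (l:ℝ) + 5)) * C * (α + 3) ^ (2 * (l + 1) + 2) := by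
      rw [hnorm]
      have hs : 4 * ((l:ℝ) + 1) ^ 2 + 4 * (2 + α + 2 * ((l:ℝ) + 1)) * (2 + α)
          ≤ (((l:ℝ) + 1) ^ 2 + 4 * (2 * (l:ℝ) + 5)) * (α + 3) ^ 2 := by
        nlinarith [mul_nonneg hl0 hl0, mul_nonneg hl0 (by linarith : (0:ℝ) ≤ α - 1),
          mul_nonneg (mul_nonneg hl0 hl0) (by linarith : (0:ℝ) ≤ α - 1),
          mul_nonneg (mul_nonneg hl0 hl0) (mul_nonneg (by linarith : (0:ℝ) ≤ α - 1)
            (by linarith : (0:ℝ) ≤ α - 1)),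
          mul_nonneg hl0 (mul_nonneg (by linarith : (0:ℝ) ≤ α - 1)
            (by linarith : (0:ℝ) ≤ α - 1)),
          mul_nonneg (by linarith : (0:ℝ) ≤ α - 1) (by linarith : (0:ℝ) ≤ α - 1)]
      have e3 : (α + 3) ^ (2 * (l + 1) + 2) = (α + 3) ^ (2 * l + 2) * (α + 3) ^ 2 := by
        ring
      rw [e3]
      have hcnn : (0:ℝ) ≤ ‖(p α (l + 1)).coeff (l + 1)‖ := norm_nonneg _
      calc (4 * ((l:ℝ) + 1) ^ 2 + 4 * (2 + α + 2 * ((l:ℝ) + 1)) * (2 + α))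
            * ‖(p α (l + 1)).coeff (l + 1)‖
          ≤ ((((l:ℝ) + 1) ^ 2 + 4 * (2 * (l:ℝ) + 5)) * (α + 3) ^ 2)
            * (C * (α + 3) ^ (2 * l + 2)) :=
            mul_le_mul hs hCb hcnn (by positivity)
        _ ≤ (200 * ((l:ℝ) + 3) ^ 2 + 4 * (2 * (l:ℝ) + 5) ^ 2 + ((l:ℝ) + 1) ^ 2
            + 4 * (2 * (l:ℝ) + 5)) * C * ((α + 3) ^ (2 * l + 2) * (α + 3) ^ 2) := by
            have hP : (0:ℝ) ≤ (α + 3) ^ (2 * l + 2) := by positivity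
            nlinarith [mul_nonneg (mul_nonneg hC0 hP) (mul_nonneg hQ0.le hQ0.le),
              mul_nonneg hl0 (mul_nonneg (mul_nonneg hC0 hP) (mul_nonneg hQ0.le hQ0.le)),
              mul_nonneg (mul_nonneg hl0 hl0) (mul_nonneg (mul_nonneg hC0 hP)
                (mul_nonneg hQ0.le hQ0.le))]
    -- part (c)
    have partc : (α + 2) ^ (2 * (l + 1) + 2) ≤ ‖(p α (l + 1 + 1)).coeff (l + 1 + 1)‖ := by
      rw [hnorm]
      have hs2 : (α + 2) ^ 2 ≤ 4 * ((l:ℝ) + 1) ^ 2 + 4 * (2 + α + 2 * ((l:ℝ) + 1)) * (2 + α) := by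
        nlinarith [mul_nonneg hl0 (by linarith : (0:ℝ) ≤ α + 2), mul_nonneg hl0 hl0]
      have e4 : (α + 2) ^ (2 * (l + 1) + 2) = (α + 2) ^ 2 * (α + 2) ^ (2 * l + 2) := by
        ring
      rw [e4]
      exact mul_le_mul hs2 hCc (by positivity) hfacnn
    exact ⟨parta, partb, partc⟩


set_option maxHeartbeats 1000000 in
/-- For every `n ≥ 1` there exist `α > -1` and `z ∈ 𝔻` such that
`ξ ↦ p_{α,n}(z̄ξ)/(1-z̄ξ)^{2+α+2n}` has exactly `n` zeros (with multiplicity) in the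
open unit disk: its zeros in 𝔻 are exactly those of the polynomial
`ξ ↦ p_{α,n}(z̄ξ)`, which has exactly `n` roots in 𝔻 counted with multiplicity. -/
theorem stmt12 (n : ℕ) (hn : 1 ≤ n) (p : ℝ → ℕ → Polynomial ℂ)
    (hp : ∀ α : ℝ, IsKernelNumeratorSeq α (p α)) :
    ∃ α : ℝ, -1 < α ∧ ∃ z : ℂ, ‖z‖ < 1 ∧
      (∀ ξ ∈ ball (0:ℂ) 1,
        ((p α n).eval ((starRingEnd ℂ) z * ξ) /
            (1 - (starRingEnd ℂ) z * ξ) ^ ((2:ℂ) + (α:ℂ) + 2 * (n:ℂ)) = 0 ↔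
          ((p α n).comp (C ((starRingEnd ℂ) z) * X)).eval ξ = 0)) ∧
      (((p α n).comp (C ((starRingEnd ℂ) z) * X)).roots.filter
          fun ξ => ‖ξ‖ < 1).card = n := by
  obtain ⟨l, rfl⟩ : ∃ l, n = l + 1 := ⟨n - 1, by omega⟩
  obtain ⟨K, hC1, hC⟩ := keyBound p hp l
  set α := max 1 (4 ^ (l + 1) * K) with hαdef
  have hα1 : 1 ≤ α := le_max_left _ _
  have hα2 : 4 ^ (l + 1) * K ≤ α := le_max_right _ _
  obtain ⟨hCa, hCb, hCc⟩ := hC α hα1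
  set q := p α (l + 1) with hqdef
  -- the coefficient gap
  have hgap : l1 (l + 1) q < ‖q.coeff (l + 1)‖ := by
    have hh1 : ((α + 3) / 2) ≤ (α + 2) := by linarith
    have hh0 : (0:ℝ) ≤ (α + 3) / 2 := by linarith
    have hh2 : ((α + 3) / 2) ^ (2 * l + 2) ≤ (α + 2) ^ (2 * l + 2) :=
      pow_le_pow_left₀ hh0 hh1 _
    have h2eq : (2:ℝ) ^ (2 * l + 2) = 4 ^ (l + 1) := by
      rw [show 2 * l + 2 = 2 * (l + 1) by ring, pow_mul]
      norm_num
    have hh3 : ((α + 3) / 2) ^ (2 * l + 2)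
        = (α + 3) ^ (2 * l + 1) * ((α + 3) / 4 ^ (l + 1)) := by
      rw [div_pow, h2eq, show (α + 3) ^ (2 * l + 2) = (α + 3) ^ (2 * l + 1) * (α + 3) from
        pow_succ _ _]
      ring
    have hh4 : K < (α + 3) / 4 ^ (l + 1) := by
      rw [lt_div_iff₀ (by positivity)]
      nlinarith [hα2]
    have hP : (0:ℝ) < (α + 3) ^ (2 * l + 1) := by positivity
    have key : K * (α + 3) ^ (2 * l + 1) < (α + 2) ^ (2 * l + 2) := by
      calc K * (α + 3) ^ (2 * l + 1)
          < ((α + 3) / 4 ^ (l + 1)) * (α + 3) ^ (2 * l + 1) :=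
            mul_lt_mul_of_pos_right hh4 hP
        _ = ((α + 3) / 2) ^ (2 * l + 2) := by rw [hh3]; ring
        _ ≤ (α + 2) ^ (2 * l + 2) := hh2
    exact lt_of_le_of_lt hCa (lt_of_lt_of_le key hCc)
  have hcoeffne : q.coeff (l + 1) ≠ 0 := by
    intro h
    rw [h, norm_zero] at hgap
    exact absurd hgap (not_lt.mpr (l1_nonneg _ _))
  have hqne : q ≠ 0 := fun h => hcoeffne (by rw [h]; simp)
  have hndle : q.natDegree ≤ l + 1 := natDeg_le α (p α) (hp α) (l + 1) (by omega)
  have hnd : q.natDegree = l + 1 := le_antisymm hndle (le_natDegree_of_ne_zero hcoeffne)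
  -- all roots of q are in the open unit disk
  have hroots : ∀ ρ ∈ q.roots, ‖ρ‖ < 1 := by
    intro ρ hρ
    have hev : q.eval ρ = 0 := ((mem_roots hqne).mp hρ)
    by_contra hge
    push_neg at hge
    have hsum : (0:ℂ) = ∑ k ∈ Finset.range (l + 2), q.coeff k * ρ ^ k := by
      rw [← hev, eval_eq_sum_range, hnd]
    rw [Finset.sum_range_succ] at hsum
    have hiso : q.coeff (l + 1) * ρ ^ (l + 1)
        = -∑ k ∈ Finset.range (l + 1), q.coeff k * ρ ^ k := by
      rw [eq_neg_iff_add_eq_zero]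
      linear_combination -hsum
    have hnorm : ‖q.coeff (l + 1)‖ * ‖ρ‖ ^ (l + 1) ≤ l1 (l + 1) q * ‖ρ‖ ^ (l + 1) := by
      calc ‖q.coeff (l + 1)‖ * ‖ρ‖ ^ (l + 1) = ‖q.coeff (l + 1) * ρ ^ (l + 1)‖ := by
            rw [norm_mul, norm_pow]
        _ = ‖∑ k ∈ Finset.range (l + 1), q.coeff k * ρ ^ k‖ := by rw [hiso, norm_neg]
        _ ≤ ∑ k ∈ Finset.range (l + 1), ‖q.coeff k * ρ ^ k‖ := norm_sum_le _ _
        _ ≤ ∑ k ∈ Finset.range (l + 1), ‖q.coeff k‖ * ‖ρ‖ ^ (l + 1) := by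
            refine Finset.sum_le_sum fun k hk => ?_
            rw [norm_mul, norm_pow]
            exact mul_le_mul_of_nonneg_left
              (pow_le_pow_right₀ (by linarith) (le_of_lt (Finset.mem_range.mp hk))) (norm_nonneg _)
        _ = l1 (l + 1) q * ‖ρ‖ ^ (l + 1) := by rw [l1, ← Finset.sum_mul]
    have hρpos : (0:ℝ) < ‖ρ‖ ^ (l + 1) := by positivity
    have := le_of_mul_le_mul_right hnorm hρpos
    linarith
  -- number of roots
  have hcard : q.roots.card = l + 1 := by
    rw [← hnd]
    exact splits_iff_card_roots.mp (IsAlgClosed.splits q)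
  have hrootsne : ∃ ρ₀, ρ₀ ∈ q.roots := by
    apply Multiset.card_pos_iff_exists_mem.mp
    omega
  obtain ⟨ρ₀, hρ₀⟩ := hrootsne
  -- the max modulus of the roots
  set s : Finset ℝ := (q.roots.map fun ρ => ‖ρ‖).toFinset with hsdef
  have hsne : s.Nonempty := ⟨‖ρ₀‖, by
    rw [hsdef, Multiset.mem_toFinset]
    exact Multiset.mem_map_of_mem _ hρ₀⟩
  set M := s.max' hsne with hMdef
  have hMmem : M ∈ s := Finset.max'_mem s hsne
  have hMroot : ∃ ρ ∈ q.roots, ‖ρ‖ = M := by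
    rw [hsdef, Multiset.mem_toFinset] at hMmem
    obtain ⟨ρ, hρ, hρM⟩ := Multiset.mem_map.mp hMmem
    exact ⟨ρ, hρ, hρM⟩
  have hM1 : M < 1 := by
    obtain ⟨ρ, hρ, hρM⟩ := hMroot
    rw [← hρM]
    exact hroots ρ hρ
  have hM0 : 0 ≤ M := by
    obtain ⟨ρ, _, hρM⟩ := hMroot
    rw [← hρM]
    exact norm_nonneg _
  have hMle : ∀ ρ ∈ q.roots, ‖ρ‖ ≤ M := by
    intro ρ hρ
    refine Finset.le_max' s _ ?_
    rw [hsdef, Multiset.mem_toFinset]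
    exact Multiset.mem_map_of_mem _ hρ
  set r : ℝ := (M + 1) / 2 with hrdef
  have hr0 : 0 < r := by rw [hrdef]; linarith
  have hr1 : r < 1 := by rw [hrdef]; linarith
  have hMr : M < r := by rw [hrdef]; linarith
  refine ⟨α, by linarith, ((r:ℝ):ℂ), ?_, ?_, ?_⟩
  · rw [Complex.norm_real, Real.norm_eq_abs]
    rwa [abs_of_pos hr0]
  · -- the division/comp equivalence on the disk
    intro ξ hξ
    have hξ1 : ‖ξ‖ < 1 := by
      rw [mem_ball, dist_zero_right] at hξ
      exact hξ
    have hconj : (starRingEnd ℂ) ((r:ℝ):ℂ) = ((r:ℝ):ℂ) := Complex.conj_ofReal r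
    have hlt : ‖(starRingEnd ℂ) ((r:ℝ):ℂ) * ξ‖ < 1 := by
      rw [hconj, norm_mul, Complex.norm_real, Real.norm_eq_abs, abs_of_pos hr0]
      nlinarith [norm_nonneg ξ]
    have hne : (1 - (starRingEnd ℂ) ((r:ℝ):ℂ) * ξ) ≠ 0 := by
      intro h
      have h1 : (1:ℂ) = (starRingEnd ℂ) ((r:ℝ):ℂ) * ξ := by
        have := sub_eq_zero.mp h
        exact this
      rw [← h1, norm_one] at hlt
      exact lt_irrefl _ hlt
    have hcpow : (1 - (starRingEnd ℂ) ((r:ℝ):ℂ) * ξ)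
        ^ ((2:ℂ) + (α:ℂ) + 2 * ((l:ℕ)+1 : ℕ) : ℂ) ≠ 0 := by
      intro h
      exact hne ((Complex.cpow_eq_zero_iff _ _).mp h).1
    have hcompeval : ((p α (l + 1)).comp (C ((starRingEnd ℂ) ((r:ℝ):ℂ)) * X)).eval ξ
        = (p α (l + 1)).eval ((starRingEnd ℂ) ((r:ℝ):ℂ) * ξ) := by
      simp [eval_comp]
    rw [hcompeval, _root_.div_eq_zero_iff]
    exact or_iff_left hcpow
  · -- the root count of the composed polynomial
    have hconj : (starRingEnd ℂ) ((r:ℝ):ℂ) = ((r:ℝ):ℂ) := Complex.conj_ofReal r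
    have hzne : ((r:ℝ):ℂ) ≠ 0 := Complex.ofReal_ne_zero.mpr (ne_of_gt hr0)
    set q2 := (p α (l + 1)).comp (C ((starRingEnd ℂ) ((r:ℝ):ℂ)) * X) with hq2def
    have hnd2 : q2.natDegree = l + 1 := by
      rw [hq2def, natDegree_comp, hconj, natDegree_C_mul hzne, natDegree_X, mul_one, hnd]
    have hq2ne : q2 ≠ 0 := by
      intro h
      rw [h, natDegree_zero] at hnd2
      omega
    have hcard2 : q2.roots.card = l + 1 := by
      rw [← hnd2]
      exact splits_iff_card_roots.mp (IsAlgClosed.splits q2)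
    have hall : ∀ ξ ∈ q2.roots, ‖ξ‖ < 1 := by
      intro ξ hξ
      have hev : q2.eval ξ = 0 := (mem_roots hq2ne).mp hξ
      have hev2 : q.eval (((r:ℝ):ℂ) * ξ) = 0 := by
        rw [hq2def] at hev
        simpa [eval_comp, hconj] using hev
      have hmem : ((r:ℝ):ℂ) * ξ ∈ q.roots := (mem_roots hqne).mpr hev2
      have hle : ‖((r:ℝ):ℂ) * ξ‖ ≤ M := hMle _ hmem
      rw [norm_mul, Complex.norm_real, Real.norm_eq_abs, abs_of_pos hr0] at hle
      have : r * ‖ξ‖ < r * 1 := by nlinarith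
      exact lt_of_mul_lt_mul_left this hr0.le
    rw [Multiset.filter_eq_self.mpr hall]
    exact hcard2
end
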